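/- Let k ≥ 2, n ≥ 1, 0 ≤ m < n, and let j = gcd(1 + mk, n + 1). The group G = ⟨α, β, y | α = y^{-k}β^{k-1}, [β, y^k] = 1, β(αβ)^m = 1, α(αβ)^{n-m} = 1⟩ has y^k central, and G/⟨⟨y^k⟩⟩ ≅ Z_k * Z_j. In particular G is abelian if j = 1, and contains a non-abelian free subgroup if j ≥ 2 and (k,j) ≠ (2,2). -/

import Mathlib

/-- `G = ⟨α, β, y | α = y^{-k}β^{k-1}, [β, y^k] = 1, β(αβ)^m = 1, α(αβ)^{n-m} = 1⟩`,
generators `α = of 0`, `β = of 1`, `y = of 2`. -/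
def relsFam2 (k n m : ℕ) : Set (FreeGroup (Fin 3)) :=
  let a := FreeGroup.of (0 : Fin 3)
  let b := FreeGroup.of (1 : Fin 3)
  let y := FreeGroup.of (2 : Fin 3)
  {a * ((y ^ k)⁻¹ * b ^ (k - 1))⁻¹,
   b * y ^ k * b⁻¹ * (y ^ k)⁻¹,
   b * (a * b) ^ m,
   a * (a * b) ^ (n - m)}

set_option linter.unusedSectionVars false
open Monoid.CoprodI

namespace StmtAux

variable {ι : Type*} [DecidableEq ι] {H : ι → Type*} [∀ i, Group (H i)] [∀ i, DecidableEq (H i)]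

lemma toList_of_smul (i : ι) (m : H i) (w : Word H) (hm : m ≠ 1) (hw : w.fstIdx ≠ some i) :
    (of m • w).toList = ⟨i, m⟩ :: w.toList := by
  rw [← Word.cons_eq_smul (m := m) (ls := w) (h1 := hw) (h2 := hm)]
  rfl

lemma fstIdx_of_toList {w : Word H} {i : ι} {m : H i} {l} (hw : w.toList = ⟨i, m⟩ :: l) :
    w.fstIdx = some i := by
  simp [Word.fstIdx, hw]

lemma exists_tail {i : ι} {m' : H i} {w : Word H} {l}
    (hw : w.toList = ⟨i, m'⟩ :: l) :
    ∃ (t : Word H) (h1 : t.fstIdx ≠ some i) (h2 : m' ≠ 1),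
      w = Word.cons m' t h1 h2 ∧ t.toList = l := by
  have hm' : m' ≠ 1 := w.ne_one ⟨i, m'⟩ (by rw [hw]; exact List.mem_cons_self)
  have hchain := w.chain_ne
  rw [hw] at hchain
  refine ⟨⟨l, ?_, hchain.tail⟩, ?_, hm', ?_, rfl⟩
  · intro x hx; exact w.ne_one x (by rw [hw]; exact List.mem_cons_of_mem _ hx)
  · cases l with
    | nil => simp [Word.fstIdx]
    | cons x xs =>
      have hx : i ≠ x.1 := (List.isChain_cons_cons.mp hchain).1
      simp [Word.fstIdx, hx.symm]
  · apply Word.ext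
    simp [hw]

lemma smul_toList_merge {i : ι} {m m' : H i} {w : Word H} {l}
    (hw : w.toList = ⟨i, m'⟩ :: l) (hmm : m * m' ≠ 1) :
    (of m • w).toList = ⟨i, m * m'⟩ :: l := by
  obtain ⟨t, h1, h2, rfl, rfl⟩ := exists_tail hw
  rw [Word.cons_eq_smul, ← mul_smul, ← MonoidHom.map_mul, toList_of_smul _ _ _ hmm h1]

lemma smul_toList_cancel {i : ι} {m m' : H i} {w : Word H} {l}
    (hw : w.toList = ⟨i, m'⟩ :: l) (hmm : m * m' = 1) :
    (of m • w).toList = l := by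
  obtain ⟨t, h1, h2, rfl, rfl⟩ := exists_tail hw
  rw [Word.cons_eq_smul, ← mul_smul, ← MonoidHom.map_mul, hmm, MonoidHom.map_one, one_smul]


section PingPong

variable {iA iB : ι} (a : H iA) (b : H iB)

/-- words starting with `a b` -/
def PS (a : H iA) (b : H iB) : Set (Word H) := {w | ∃ t, w.toList = ⟨iA, a⟩ :: ⟨iB, b⟩ :: t}

/-- words starting with `b a⁻¹` -/
def NS (a : H iA) (b : H iB) : Set (Word H) := {w | ∃ t, w.toList = ⟨iB, b⟩ :: ⟨iA, a⁻¹⟩ :: t}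

variable (hAB : iA ≠ iB) (ha : a ≠ 1) (hb : b ≠ 1) (hb2 : b * b ≠ 1)

include hAB ha hb hb2 in
lemma step_pos (w : Word H) (hw : w ∈ PS a b⁻¹ ∪ NS a b⁻¹ ∪ PS a b) :
    (of a * of b * of a * (of b)⁻¹) • w ∈ PS a b := by
  have hb' : b⁻¹ ≠ 1 := inv_ne_one.mpr hb
  have hsplit : (of a * of b * of a * (of b)⁻¹) • w
      = of a • (of b • (of a • (of b⁻¹ • w))) := by
    rw [← MonoidHom.map_inv, mul_smul, mul_smul, mul_smul]
  rw [hsplit]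
  rcases hw with (⟨t, hw⟩ | ⟨t, hw⟩) | ⟨t, hw⟩
  · -- w = a b⁻¹ …
    have h1 : (of b⁻¹ • w).toList = ⟨iB, b⁻¹⟩ :: ⟨iA, a⟩ :: ⟨iB, b⁻¹⟩ :: t :=
      (by rw [toList_of_smul _ _ _ hb' (by rw [fstIdx_of_toList hw]; simp [hAB]), hw])
    have h2 : (of a • (of b⁻¹ • w)).toList = ⟨iA, a⟩ :: ⟨iB, b⁻¹⟩ :: ⟨iA, a⟩ :: ⟨iB, b⁻¹⟩ :: t :=
      (by rw [toList_of_smul _ _ _ ha (by rw [fstIdx_of_toList h1]; simp [hAB.symm]), h1])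
    have h3 : (of b • (of a • (of b⁻¹ • w))).toList
        = ⟨iB, b⟩ :: ⟨iA, a⟩ :: ⟨iB, b⁻¹⟩ :: ⟨iA, a⟩ :: ⟨iB, b⁻¹⟩ :: t :=
      (by rw [toList_of_smul _ _ _ hb (by rw [fstIdx_of_toList h2]; simp [hAB]), h2])
    exact ⟨_, by rw [toList_of_smul _ _ _ ha (by rw [fstIdx_of_toList h3]; simp [hAB.symm]), h3]⟩
  · -- w = b⁻¹ a⁻¹ …
    have hbb : b⁻¹ * b⁻¹ ≠ 1 := by rw [← mul_inv_rev]; exact inv_ne_one.mpr hb2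
    have h1 : (of b⁻¹ • w).toList = ⟨iB, b⁻¹ * b⁻¹⟩ :: ⟨iA, a⁻¹⟩ :: t :=
      smul_toList_merge hw hbb
    have h2 : (of a • (of b⁻¹ • w)).toList = ⟨iA, a⟩ :: ⟨iB, b⁻¹ * b⁻¹⟩ :: ⟨iA, a⁻¹⟩ :: t :=
      (by rw [toList_of_smul _ _ _ ha (by rw [fstIdx_of_toList h1]; simp [hAB.symm]), h1])
    have h3 : (of b • (of a • (of b⁻¹ • w))).toList
        = ⟨iB, b⟩ :: ⟨iA, a⟩ :: ⟨iB, b⁻¹ * b⁻¹⟩ :: ⟨iA, a⁻¹⟩ :: t :=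
      (by rw [toList_of_smul _ _ _ hb (by rw [fstIdx_of_toList h2]; simp [hAB]), h2])
    exact ⟨_, by rw [toList_of_smul _ _ _ ha (by rw [fstIdx_of_toList h3]; simp [hAB.symm]), h3]⟩
  · -- w = a b …
    have h1 : (of b⁻¹ • w).toList = ⟨iB, b⁻¹⟩ :: ⟨iA, a⟩ :: ⟨iB, b⟩ :: t :=
      (by rw [toList_of_smul _ _ _ hb' (by rw [fstIdx_of_toList hw]; simp [hAB]), hw])
    have h2 : (of a • (of b⁻¹ • w)).toList = ⟨iA, a⟩ :: ⟨iB, b⁻¹⟩ :: ⟨iA, a⟩ :: ⟨iB, b⟩ :: t :=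
      (by rw [toList_of_smul _ _ _ ha (by rw [fstIdx_of_toList h1]; simp [hAB.symm]), h1])
    have h3 : (of b • (of a • (of b⁻¹ • w))).toList
        = ⟨iB, b⟩ :: ⟨iA, a⟩ :: ⟨iB, b⁻¹⟩ :: ⟨iA, a⟩ :: ⟨iB, b⟩ :: t :=
      (by rw [toList_of_smul _ _ _ hb (by rw [fstIdx_of_toList h2]; simp [hAB]), h2])
    exact ⟨_, by rw [toList_of_smul _ _ _ ha (by rw [fstIdx_of_toList h3]; simp [hAB.symm]), h3]⟩

include hAB ha hb hb2 in
lemma step_neg (w : Word H) (hw : w ∈ PS a b⁻¹ ∪ NS a b⁻¹ ∪ NS a b) :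
    (of a * of b * of a * (of b)⁻¹)⁻¹ • w ∈ NS a b := by
  have ha' : a⁻¹ ≠ 1 := inv_ne_one.mpr ha
  have hb' : b⁻¹ ≠ 1 := inv_ne_one.mpr hb
  have hsplit : (of a * of b * of a * (of b)⁻¹)⁻¹ • w
      = of b • (of a⁻¹ • (of b⁻¹ • (of a⁻¹ • w))) := by
    rw [show (of a * of b * of a * (of b)⁻¹)⁻¹
        = of b * (of a)⁻¹ * (of b)⁻¹ * (of a)⁻¹ by group,
      ← MonoidHom.map_inv, ← MonoidHom.map_inv,
      mul_smul, mul_smul, mul_smul]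
  rw [hsplit]
  rcases hw with (⟨t, hw⟩ | ⟨t, hw⟩) | ⟨t, hw⟩
  · -- w = a b⁻¹ … : cancel, merge, cons, cons
    have hbb : b⁻¹ * b⁻¹ ≠ 1 := by rw [← mul_inv_rev]; exact inv_ne_one.mpr hb2
    have h1 : (of a⁻¹ • w).toList = ⟨iB, b⁻¹⟩ :: t :=
      smul_toList_cancel hw (inv_mul_cancel a)
    have h2 : (of b⁻¹ • (of a⁻¹ • w)).toList = ⟨iB, b⁻¹ * b⁻¹⟩ :: t :=
      smul_toList_merge h1 hbb
    have h3 : (of a⁻¹ • (of b⁻¹ • (of a⁻¹ • w))).toList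
        = ⟨iA, a⁻¹⟩ :: ⟨iB, b⁻¹ * b⁻¹⟩ :: t :=
      (by rw [toList_of_smul _ _ _ ha' (by rw [fstIdx_of_toList h2]; simp [hAB.symm]), h2])
    exact ⟨_, by rw [toList_of_smul _ _ _ hb (by rw [fstIdx_of_toList h3]; simp [hAB]), h3]⟩
  · -- w = b⁻¹ a⁻¹ …
    have h1 : (of a⁻¹ • w).toList = ⟨iA, a⁻¹⟩ :: ⟨iB, b⁻¹⟩ :: ⟨iA, a⁻¹⟩ :: t :=
      (by rw [toList_of_smul _ _ _ ha' (by rw [fstIdx_of_toList hw]; simp [hAB.symm]), hw])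
    have h2 : (of b⁻¹ • (of a⁻¹ • w)).toList
        = ⟨iB, b⁻¹⟩ :: ⟨iA, a⁻¹⟩ :: ⟨iB, b⁻¹⟩ :: ⟨iA, a⁻¹⟩ :: t :=
      (by rw [toList_of_smul _ _ _ hb' (by rw [fstIdx_of_toList h1]; simp [hAB]), h1])
    have h3 : (of a⁻¹ • (of b⁻¹ • (of a⁻¹ • w))).toList
        = ⟨iA, a⁻¹⟩ :: ⟨iB, b⁻¹⟩ :: ⟨iA, a⁻¹⟩ :: ⟨iB, b⁻¹⟩ :: ⟨iA, a⁻¹⟩ :: t :=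
      (by rw [toList_of_smul _ _ _ ha' (by rw [fstIdx_of_toList h2]; simp [hAB.symm]), h2])
    exact ⟨_, by rw [toList_of_smul _ _ _ hb (by rw [fstIdx_of_toList h3]; simp [hAB]), h3]⟩
  · -- w = b a⁻¹ …
    have h1 : (of a⁻¹ • w).toList = ⟨iA, a⁻¹⟩ :: ⟨iB, b⟩ :: ⟨iA, a⁻¹⟩ :: t :=
      (by rw [toList_of_smul _ _ _ ha' (by rw [fstIdx_of_toList hw]; simp [hAB.symm]), hw])
    have h2 : (of b⁻¹ • (of a⁻¹ • w)).toList
        = ⟨iB, b⁻¹⟩ :: ⟨iA, a⁻¹⟩ :: ⟨iB, b⟩ :: ⟨iA, a⁻¹⟩ :: t :=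
      (by rw [toList_of_smul _ _ _ hb' (by rw [fstIdx_of_toList h1]; simp [hAB]), h1])
    have h3 : (of a⁻¹ • (of b⁻¹ • (of a⁻¹ • w))).toList
        = ⟨iA, a⁻¹⟩ :: ⟨iB, b⁻¹⟩ :: ⟨iA, a⁻¹⟩ :: ⟨iB, b⟩ :: ⟨iA, a⁻¹⟩ :: t :=
      (by rw [toList_of_smul _ _ _ ha' (by rw [fstIdx_of_toList h2]; simp [hAB.symm]), h2])
    exact ⟨_, by rw [toList_of_smul _ _ _ hb (by rw [fstIdx_of_toList h3]; simp [hAB]), h3]⟩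

include hAB ha hb hb2 in
lemma zpow_smul_mem (z : ℤ) (hz : z ≠ 0) (w : Word H) (hw : w ∈ PS a b⁻¹ ∪ NS a b⁻¹) :
    ((of a * of b * of a * (of b)⁻¹) ^ z) • w ∈ PS a b ∪ NS a b := by
  set x := of a * of b * of a * (of b)⁻¹ with hx
  have hpos : ∀ s : ℕ, ∀ w : Word H, w ∈ PS a b⁻¹ ∪ NS a b⁻¹ → (x ^ (s + 1)) • w ∈ PS a b := by
    intro s
    induction s with
    | zero => intro w hw; rw [pow_one]; exact step_pos a b hAB ha hb hb2 w (Or.inl hw)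
    | succ s ih =>
      intro w hw
      rw [pow_succ', mul_smul]
      exact step_pos a b hAB ha hb hb2 _ (Or.inr (ih w hw))
  have hneg : ∀ s : ℕ, ∀ w : Word H, w ∈ PS a b⁻¹ ∪ NS a b⁻¹ → (x⁻¹ ^ (s + 1)) • w ∈ NS a b := by
    intro s
    induction s with
    | zero => intro w hw; rw [pow_one]; exact step_neg a b hAB ha hb hb2 w (Or.inl hw)
    | succ s ih =>
      intro s' hw
      rw [pow_succ', mul_smul]
      exact step_neg a b hAB ha hb hb2 _ (Or.inr (ih s' hw))
  rcases hz.lt_or_gt with h | h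
  · right
    have h1 : (0:ℤ) < -z := by omega
    obtain ⟨s, hs⟩ : ∃ s : ℕ, -z = (s : ℤ) + 1 := ⟨(-z - 1).toNat, by omega⟩
    have hxz : x ^ z = x⁻¹ ^ (s + 1) := by
      rw [inv_pow, ← zpow_natCast, ← zpow_neg]
      congr 1
      push_cast
      omega
    rw [hxz]
    exact hneg s w hw
  · left
    obtain ⟨s, hs⟩ : ∃ s : ℕ, z = (s : ℤ) + 1 := ⟨(z - 1).toNat, by omega⟩
    have : x ^ z = x ^ (s + 1) := by
      rw [hs, ← zpow_natCast]; norm_num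
    rw [this]
    exact hpos s w hw

include hAB in
lemma disj_union {c : H iB} (hbc : b ≠ c) :
    Disjoint (PS a b ∪ NS a b) (PS (iA := iA) a c ∪ NS a c) := by
  rw [Set.disjoint_left]
  have key : ∀ (i' : ι) (u u' : H i'), (⟨i', u⟩ : Σ i, H i) = ⟨i', u'⟩ → u = u' :=
    fun i' u u' hh => eq_of_heq (Sigma.ext_iff.mp hh).2
  rintro w (⟨t, h⟩ | ⟨t, h⟩) (⟨t', h'⟩ | ⟨t', h'⟩) <;> rw [h] at h' <;>
    simp only [List.cons.injEq] at h'
  · exact hbc (key _ _ _ h'.2.1)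
  · exact hAB (congrArg Sigma.fst h'.1)
  · exact hAB (congrArg Sigma.fst h'.1).symm
  · exact hbc (key _ _ _ h'.1)

include hAB ha hb hb2 in
theorem exists_free_pp :
    ∃ F : FreeGroup (Fin 2) →* Monoid.CoprodI H, Function.Injective F := by
  classical
  set x : Monoid.CoprodI H := of a * of b * of a * (of b)⁻¹ with hxdef
  set y : Monoid.CoprodI H := of a * of b⁻¹ * of a * (of b⁻¹)⁻¹ with hydef
  have hb' : b⁻¹ ≠ 1 := inv_ne_one.mpr hb
  have hb2' : b⁻¹ * b⁻¹ ≠ 1 := by rw [← mul_inv_rev]; exact inv_ne_one.mpr hb2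
  have hbne : b ≠ b⁻¹ := fun h => hb2 (by nth_rewrite 2 [h]; exact mul_inv_cancel b)
  set f' : ∀ i : Fin 2, FreeGroup Unit →* Monoid.CoprodI H :=
    fun i => FreeGroup.lift (fun _ => if i = 0 then x else y) with hf'
  have hcard : 3 ≤ Cardinal.mk (Fin 2) ∨ ∃ i : Fin 2, 3 ≤ Cardinal.mk (FreeGroup Unit) := by
    right
    exact ⟨0, le_trans (le_of_lt (by exact_mod_cast Cardinal.nat_lt_aleph0 3))
      (Cardinal.aleph0_le_mk _)⟩
  have hinj : Function.Injective (Monoid.CoprodI.lift f') := by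
    apply Monoid.CoprodI.lift_injective_of_ping_pong f' hcard
      ![PS a b ∪ NS a b, PS a b⁻¹ ∪ NS a b⁻¹]
    · -- nonempty
      intro i
      have hw1 : ∀ (c : H iB) (hc : c ≠ 1), (⟨[⟨iA, a⟩, ⟨iB, c⟩],
          by rintro l hl; simp only [List.mem_cons, List.mem_singleton,
            List.not_mem_nil, or_false] at hl; rcases hl with rfl | rfl; exacts [ha, hc],
          by simp [List.isChain_cons_cons, hAB]⟩ : Word H) ∈ PS a c := fun c hc => ⟨[], rfl⟩
      fin_cases i
      · exact ⟨_, Or.inl (hw1 b hb)⟩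
      · exact ⟨_, Or.inl (hw1 b⁻¹ hb')⟩

    · -- disjoint
      intro i j hij
      fin_cases i <;> fin_cases j <;>
        simp only [Function.onFun, Matrix.cons_val_zero, Matrix.cons_val_one, Matrix.head_cons]
      · exact absurd rfl hij
      · exact disj_union a b hAB hbne
      · exact disj_union a b⁻¹ hAB (Ne.symm hbne)
      · exact absurd rfl hij
    · -- ping pong
      intro i j hij h hh
      obtain ⟨z, hz⟩ : ∃ z : ℤ, (FreeGroup.of ()) ^ z = h := by
        have : h ∈ Subgroup.closure {FreeGroup.of ()} := by
          rw [← Set.range_unique (f := FreeGroup.of), FreeGroup.closure_range_of]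
          trivial
        exact Subgroup.mem_closure_singleton.mp this
      have hz0 : z ≠ 0 := by
        rintro rfl
        rw [zpow_zero] at hz
        exact hh hz.symm
      have hfh : f' i h = (if i = 0 then x else y) ^ z := by
        rw [← hz, map_zpow, hf']
        simp
      have hcase : (i = 0 ∧ j = 1) ∨ (i = 1 ∧ j = 0) :=
        (by decide : ∀ i j : Fin 2, i ≠ j → (i = 0 ∧ j = 1) ∨ (i = 1 ∧ j = 0)) i j hij
      rcases hcase with ⟨rfl, rfl⟩ | ⟨rfl, rfl⟩
      · -- i = 0, j = 1
        rw [if_pos rfl] at hfh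
        rw [hfh]
        intro w hw
        simp only [Matrix.cons_val_one, Matrix.head_cons] at hw
        obtain ⟨v, hv, rfl⟩ := hw
        simp only [Matrix.cons_val_zero]
        exact zpow_smul_mem a b hAB ha hb hb2 z hz0 v hv
      · -- i = 1, j = 0
        rw [if_neg (by decide)] at hfh
        rw [hfh]
        intro w hw
        simp only [Matrix.cons_val_zero] at hw
        obtain ⟨v, hv, rfl⟩ := hw
        simp only [Matrix.cons_val_one, Matrix.head_cons]
        have := zpow_smul_mem a b⁻¹ hAB ha hb' hb2' z hz0 v (by rw [inv_inv]; exact hv)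
        simpa [hydef] using this
  exact ⟨(Monoid.CoprodI.lift f').comp (freeGroupEquivCoprodI (ι := Fin 2)).toMonoidHom,
    hinj.comp (MulEquiv.injective _)⟩

end PingPong
end StmtAux

namespace StmtAux2

/-- Monoid hom `Multiplicative (ZMod d) →* G` sending `ofAdd 1` to an element `x` with
`x ^ d = 1`. -/
noncomputable def multZModHom (d : ℕ) {G : Type*} [Group G] (x : G) (hx : x ^ d = 1) :
    Multiplicative (ZMod d) →* G :=
  AddMonoidHom.toMultiplicativeLeft
    (ZMod.lift d ⟨zmultiplesHom (Additive G) (Additive.ofMul x), by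
      show ((d : ℤ)) • Additive.ofMul x = 0
      rw [← ofMul_zpow, zpow_natCast, hx]
      rfl⟩)

lemma multZModHom_intCast (d : ℕ) {G : Type*} [Group G] (x : G) (hx : x ^ d = 1) (t : ℤ) :
    multZModHom d x hx (Multiplicative.ofAdd ((t : ZMod d))) = x ^ t := by
  simp only [multZModHom, AddMonoidHom.coe_toMultiplicativeLeft, Function.comp_apply]
  rw [show Multiplicative.toAdd (Multiplicative.ofAdd ((t : ZMod d))) = ((t : ZMod d)) from rfl,
    ZMod.lift_coe]
  rfl

lemma multZModHom_natCast (d : ℕ) {G : Type*} [Group G] (x : G) (hx : x ^ d = 1) (t : ℕ) :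
    multZModHom d x hx (Multiplicative.ofAdd ((t : ZMod d))) = x ^ t := by
  have := multZModHom_intCast d x hx (t : ℤ)
  rw [zpow_natCast] at this
  rw [← this]
  norm_cast

lemma multZModHom_one (d : ℕ) {G : Type*} [Group G] (x : G) (hx : x ^ d = 1) :
    multZModHom d x hx (Multiplicative.ofAdd (1 : ZMod d)) = x := by
  have := multZModHom_natCast d x hx 1
  rw [Nat.cast_one, pow_one] at this
  exact this

lemma multZMod_hom_ext {d : ℕ} {M : Type*} [Group M] {f g : Multiplicative (ZMod d) →* M}
    (h : f (Multiplicative.ofAdd (1 : ZMod d)) = g (Multiplicative.ofAdd (1 : ZMod d))) :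
    f = g := by
  refine MonoidHom.ext fun x => ?_
  obtain ⟨t, ht⟩ := ZMod.intCast_surjective (Multiplicative.toAdd x)
  have hx : x = (Multiplicative.ofAdd (1 : ZMod d)) ^ t := by
    rw [← ofAdd_zsmul]
    rw [show x = Multiplicative.ofAdd (Multiplicative.toAdd x) from rfl, ← ht]
    congr 1
    rw [zsmul_eq_mul, mul_one]
  rw [hx, map_zpow, map_zpow, h]

end StmtAux2

namespace StmtMain

variable (k n m : ℕ)

local notation "GP" => PresentedGroup (relsFam2 k n m)

noncomputable def Ag : GP := PresentedGroup.of 0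
noncomputable def Bg : GP := PresentedGroup.of 1
noncomputable def Yg : GP := PresentedGroup.of 2
noncomputable def cg : GP := Ag k n m * Bg k n m

lemma relhold : ∀ r ∈ relsFam2 k n m, (PresentedGroup.mk (relsFam2 k n m)) r = 1 := fun _ hr =>
  (QuotientGroup.eq_one_iff _).mpr (Subgroup.subset_normalClosure hr)

lemma R1 : Ag k n m * ((Yg k n m ^ k)⁻¹ * Bg k n m ^ (k - 1))⁻¹ = 1 := by
  have h := relhold k n m (FreeGroup.of 0 * ((FreeGroup.of 2 ^ k)⁻¹ * FreeGroup.of 1 ^ (k - 1))⁻¹)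
    (by simp [relsFam2])
  simpa [map_mul, map_inv, map_pow, Ag, Bg, Yg, PresentedGroup.of] using h

lemma R2 : Bg k n m * Yg k n m ^ k * (Bg k n m)⁻¹ * (Yg k n m ^ k)⁻¹ = 1 := by
  have h := relhold k n m (FreeGroup.of 1 * FreeGroup.of 2 ^ k * (FreeGroup.of 1)⁻¹ *
    (FreeGroup.of 2 ^ k)⁻¹) (by simp [relsFam2])
  simpa [map_mul, map_inv, map_pow, Bg, Yg, PresentedGroup.of] using h

lemma R3 : Bg k n m * cg k n m ^ m = 1 := by
  have h := relhold k n m (FreeGroup.of 1 * (FreeGroup.of 0 * FreeGroup.of 1) ^ m)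
    (by simp [relsFam2])
  simpa [map_mul, map_inv, map_pow, Ag, Bg, cg, PresentedGroup.of] using h

lemma R4 : Ag k n m * cg k n m ^ (n - m) = 1 := by
  have h := relhold k n m (FreeGroup.of 0 * (FreeGroup.of 0 * FreeGroup.of 1) ^ (n - m))
    (by simp [relsFam2])
  simpa [map_mul, map_inv, map_pow, Ag, Bg, cg, PresentedGroup.of] using h

lemma eqA : Ag k n m = (cg k n m ^ (n - m))⁻¹ := mul_eq_one_iff_eq_inv.mp (R4 k n m)

lemma eqB : Bg k n m = (cg k n m ^ m)⁻¹ := mul_eq_one_iff_eq_inv.mp (R3 k n m)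

lemma eq1 : Ag k n m = (Yg k n m ^ k)⁻¹ * Bg k n m ^ (k - 1) :=
  mul_inv_eq_one.mp (R1 k n m)

lemma commYB : Commute (Yg k n m ^ k) (Bg k n m) := by
  have h := R2 k n m
  rw [mul_inv_eq_one, mul_inv_eq_iff_eq_mul] at h
  exact h.symm

lemma commYA : Commute (Yg k n m ^ k) (Ag k n m) := by
  rw [eq1]
  exact ((Commute.refl _).inv_right).mul_right ((commYB k n m).pow_right _)

lemma hcent : Yg k n m ^ k ∈ Subgroup.center GP := by
  refine Subgroup.mem_center_iff.mpr fun g => ?_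
  have hg : g ∈ Subgroup.centralizer {Yg k n m ^ k} := by
    refine PresentedGroup.generated_by _ _ (fun i => ?_) g
    refine Subgroup.mem_centralizer_iff.mpr ?_
    rintro h hh
    rw [Set.eq_of_mem_singleton hh]
    fin_cases i
    · exact commYA k n m
    · exact commYB k n m
    · exact ((Commute.refl (Yg k n m)).pow_left k)
  exact (Subgroup.mem_centralizer_iff.mp hg _ rfl).symm

variable {k n m} (hm' : m ≤ n) (hk1 : 1 ≤ k)

include hm' in
lemma hc1 : cg k n m ^ (n + 1) = 1 := by
  have h : cg k n m = (cg k n m ^ n)⁻¹ := by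
    conv_lhs => rw [show cg k n m = Ag k n m * Bg k n m from rfl, eqA, eqB]
    rw [← mul_inv_rev, ← pow_add, Nat.add_sub_cancel' hm']
  rw [pow_succ']
  nth_rewrite 1 [h]
  rw [inv_mul_cancel]

include hm' hk1 in
lemma hYc : Yg k n m ^ k * cg k n m ^ (1 + m * k) = 1 := by
  have hYk : Yg k n m ^ k = Bg k n m ^ (k - 1) * (Ag k n m)⁻¹ := by
    rw [eq1]
    group
  rw [hYk, eqB, eqA, inv_inv, inv_pow, ← pow_mul, mul_assoc, ← pow_add, inv_mul_eq_one]
  have hp : m ≤ m * k := Nat.le_mul_of_pos_right m (by omega)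
  have hmk : m * (k - 1) = m * k - m := by rw [Nat.mul_sub, mul_one]
  have harith : n - m + (1 + m * k) = m * (k - 1) + (n + 1) := by
    rw [hmk]; omega
  rw [harith, pow_add, hc1 hm', mul_one]

include hm' hk1 in
lemma c_mem_zpowers (hj1 : Nat.gcd (1 + m * k) (n + 1) = 1) :
    cg k n m ∈ Subgroup.zpowers (Yg k n m) := by
  have h1 : cg k n m ^ (1 + m * k) = (Yg k n m ^ k)⁻¹ := by
    have := hYc hm' hk1
    rw [mul_eq_one_iff_eq_inv] at this
    rw [this, inv_inv]
  set u := Nat.gcdA (1 + m * k) (n + 1) with hu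
  set v := Nat.gcdB (1 + m * k) (n + 1) with hv
  have hbez : (1 : ℤ) = (1 + m * k : ℕ) * u + (n + 1 : ℕ) * v := by
    have := Nat.gcd_eq_gcd_ab (1 + m * k) (n + 1)
    rw [hj1] at this
    exact_mod_cast this
  have hc : cg k n m = ((Yg k n m ^ k)⁻¹) ^ u := by
    conv_lhs => rw [← zpow_one (cg k n m), hbez]
    rw [zpow_add, zpow_mul, zpow_mul, zpow_natCast, zpow_natCast, h1, hc1 hm', one_zpow, mul_one]
  rw [hc]
  exact Subgroup.zpow_mem _ (Subgroup.inv_mem _ (Subgroup.pow_mem _ (Subgroup.mem_zpowers _) k)) u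

include hm' hk1 in
lemma all_zpowers (hj1 : Nat.gcd (1 + m * k) (n + 1) = 1) (x : GP) :
    x ∈ Subgroup.zpowers (Yg k n m) := by
  refine PresentedGroup.generated_by _ _ (fun i => ?_) x
  have hc := c_mem_zpowers hm' hk1 hj1
  fin_cases i
  · show Ag k n m ∈ _
    rw [eqA]
    exact Subgroup.inv_mem _ (Subgroup.pow_mem _ hc _)
  · show Bg k n m ∈ _
    rw [eqB]
    exact Subgroup.inv_mem _ (Subgroup.pow_mem _ hc _)
  · exact Subgroup.mem_zpowers _

include hm' hk1 in
lemma abelian_of_gcd_one (hj1 : Nat.gcd (1 + m * k) (n + 1) = 1) (x y : GP) :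
    x * y = y * x := by
  obtain ⟨s, rfl⟩ := Subgroup.mem_zpowers_iff.mp (all_zpowers hm' hk1 hj1 x)
  obtain ⟨t, rfl⟩ := Subgroup.mem_zpowers_iff.mp (all_zpowers hm' hk1 hj1 y)
  rw [← zpow_add, ← zpow_add, add_comm]

section Quot

variable (j : ℕ)

local notation "NN" => Subgroup.normalClosure ({Yg k n m ^ k} : Set GP)
local notation "QQ" => GP ⧸ NN
local notation "CC" => Monoid.Coprod (Multiplicative (ZMod k)) (Multiplicative (ZMod j))

include hm' hk1 in
lemma exists_iso (hj : j = Nat.gcd (1 + m * k) (n + 1)) : Nonempty (QQ ≃* CC) := by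
  have hdvd1 : j ∣ 1 + m * k := hj ▸ Nat.gcd_dvd_left _ _
  have hdvd2 : j ∣ n + 1 := hj ▸ Nat.gcd_dvd_right _ _
  have hz1 : ((1 + m * k : ℕ) : ZMod j) = 0 := (ZMod.natCast_eq_zero_iff _ _).mpr hdvd1
  have hz2 : ((n + 1 : ℕ) : ZMod j) = 0 := (ZMod.natCast_eq_zero_iff _ _).mpr hdvd2
  have hz1' : (1 : ZMod j) + (m : ZMod j) * (k : ZMod j) = 0 := by push_cast at hz1; exact hz1
  have hz2' : (n : ZMod j) + 1 = 0 := by push_cast at hz2; exact hz2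
  set HHe : CC := Monoid.Coprod.inr (Multiplicative.ofAdd (1 : ZMod j)) with hHHe
  set GGe : CC := Monoid.Coprod.inl (Multiplicative.ofAdd (1 : ZMod k)) with hGGe
  have hGGk : GGe ^ k = 1 := by
    rw [hGGe, ← map_pow]
    have h1 : (Multiplicative.ofAdd (1 : ZMod k)) ^ k = 1 := by
      rw [← ofAdd_nsmul, nsmul_eq_mul, mul_one, ZMod.natCast_self]
      rfl
    rw [h1, map_one]
  have hHHz : ∀ z : ℤ, HHe ^ z = Monoid.Coprod.inr (Multiplicative.ofAdd ((z : ZMod j))) := by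
    intro z
    rw [hHHe, ← map_zpow]
    congr 1
    rw [← ofAdd_zsmul, zsmul_eq_mul, mul_one]
  have hHHn : ∀ t : ℕ, HHe ^ t = Monoid.Coprod.inr (Multiplicative.ofAdd ((t : ZMod j))) := by
    intro t
    have h1 := hHHz (t : ℤ)
    rw [zpow_natCast] at h1
    rw [h1]
    norm_num
  have hHHone : ∀ t : ℕ, ((t : ZMod j) = 0) → HHe ^ t = 1 := by
    intro t ht
    rw [hHHn t, ht, ofAdd_zero, map_one]
  have hHHeq : ∀ s t : ℕ, ((s : ZMod j) = (t : ZMod j)) → HHe ^ s = HHe ^ t := by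
    intro s t hst
    rw [hHHn, hHHn, hst]
  set f : Fin 3 → CC := ![(HHe ^ (n - m))⁻¹, (HHe ^ m)⁻¹, GGe] with hf
  have hf0 : f 0 = (HHe ^ (n - m))⁻¹ := rfl
  have hf1 : f 1 = (HHe ^ m)⁻¹ := rfl
  have hf2 : f 2 = GGe := rfl
  have hfAB : f 0 * f 1 = (HHe ^ n)⁻¹ := by
    rw [hf0, hf1, ← mul_inv_rev, ← pow_add, Nat.add_sub_cancel' hm']
  have hrels : ∀ r ∈ relsFam2 k n m, FreeGroup.lift f r = 1 := by
    intro r hr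
    simp only [relsFam2, Set.mem_insert_iff, Set.mem_singleton_iff] at hr
    rcases hr with rfl | rfl | rfl | rfl
    · simp only [map_mul, map_inv, map_pow, FreeGroup.lift_apply_of, hf0, hf1, hf2]
      rw [hGGk, inv_one, one_mul, inv_pow, inv_inv, ← pow_mul, inv_mul_eq_one]
      symm
      apply hHHeq
      push_cast [Nat.cast_sub hm', Nat.cast_sub hk1]
      linear_combination hz1' - hz2'
    · simp only [map_mul, map_inv, map_pow, FreeGroup.lift_apply_of, hf1, hf2]
      rw [hGGk]
      simp
    · simp only [map_mul, map_pow, FreeGroup.lift_apply_of]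
      rw [hfAB, hf1, inv_pow, ← pow_mul, ← mul_inv_rev, ← pow_add, inv_eq_one]
      apply hHHone
      push_cast
      linear_combination (m : ZMod j) * hz2'
    · simp only [map_mul, map_pow, FreeGroup.lift_apply_of]
      rw [hfAB, hf0, inv_pow, ← pow_mul, ← mul_inv_rev, ← pow_add, inv_eq_one]
      apply hHHone
      push_cast [Nat.cast_sub hm']
      linear_combination ((n : ZMod j) - (m : ZMod j)) * hz2'
  set Φ0 : GP →* CC := PresentedGroup.toGroup hrels with hΦ0
  have hΦ0of : ∀ x : Fin 3, Φ0 (PresentedGroup.of x) = f x := by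
    intro x
    rw [hΦ0]
    exact PresentedGroup.toGroup.of hrels
  have hΦ0Y : Φ0 (Yg k n m ^ k) = 1 := by
    rw [map_pow, show Φ0 (Yg k n m) = f 2 from hΦ0of 2, hf2]
    exact hGGk
  have hker : NN ≤ Φ0.ker := by
    apply Subgroup.normalClosure_le_normal
    rw [Set.singleton_subset_iff]
    exact hΦ0Y
  set Φ : QQ →* CC := QuotientGroup.lift _ Φ0 hker with hΦ
  set π : GP →* QQ := QuotientGroup.mk' _ with hπ
  have hΦπ : ∀ g, Φ (π g) = Φ0 g := fun g => QuotientGroup.lift_mk' _ _ g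
  have hYb : (π (Yg k n m)) ^ k = 1 := by
    rw [← map_pow]
    exact (QuotientGroup.eq_one_iff _).mpr (Subgroup.subset_normalClosure rfl)
  have hcb1 : (π (cg k n m)) ^ (n + 1) = 1 := by
    rw [← map_pow, hc1 hm', map_one]
  have hcb2 : (π (cg k n m)) ^ (1 + m * k) = 1 := by
    have h := congrArg π (hYc hm' hk1)
    rw [map_mul, map_one, map_pow, map_pow, hYb, one_mul] at h
    exact h
  have hcbj : (π (cg k n m)) ^ j = 1 := by
    apply orderOf_dvd_iff_pow_eq_one.mp
    rw [hj]
    exact Nat.dvd_gcd (orderOf_dvd_of_pow_eq_one hcb2) (orderOf_dvd_of_pow_eq_one hcb1)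
  set ψ1 := StmtAux2.multZModHom k (π (Yg k n m)) hYb with hψ1
  set ψ2 := StmtAux2.multZModHom j (π (cg k n m)) hcbj with hψ2
  set Ψ : CC →* QQ := Monoid.Coprod.lift ψ1 ψ2 with hΨ
  have hAbar : π (Ag k n m) = ((π (cg k n m)) ^ (n - m))⁻¹ := by
    rw [← map_pow, ← map_inv]
    exact congrArg π (eqA k n m)
  have hBbar : π (Bg k n m) = ((π (cg k n m)) ^ m)⁻¹ := by
    rw [← map_pow, ← map_inv]
    exact congrArg π (eqB k n m)
  have hΨHH : Ψ HHe = π (cg k n m) := by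
    rw [hΨ, hHHe, Monoid.Coprod.lift_apply_inr, hψ2]
    exact StmtAux2.multZModHom_one _ _ _
  have hΨGG : Ψ GGe = π (Yg k n m) := by
    rw [hΨ, hGGe, Monoid.Coprod.lift_apply_inl, hψ1]
    exact StmtAux2.multZModHom_one _ _ _
  have hcomp1 : Ψ.comp Φ = MonoidHom.id _ := by
    apply QuotientGroup.monoidHom_ext
    apply PresentedGroup.ext
    intro x
    show Ψ (Φ (π (PresentedGroup.of x))) = π (PresentedGroup.of x)
    rw [hΦπ, hΦ0of]
    fin_cases x
    · show Ψ ((HHe ^ (n - m))⁻¹) = π (Ag k n m)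
      rw [map_inv, map_pow, hΨHH, hAbar]
    · show Ψ ((HHe ^ m)⁻¹) = π (Bg k n m)
      rw [map_inv, map_pow, hΨHH, hBbar]
    · show Ψ GGe = π (Yg k n m)
      exact hΨGG
  have hcomp2 : Φ.comp Ψ = MonoidHom.id _ := by
    apply Monoid.Coprod.hom_ext
    · apply StmtAux2.multZMod_hom_ext
      show Φ (Ψ (Monoid.Coprod.inl (Multiplicative.ofAdd (1 : ZMod k))))
        = Monoid.Coprod.inl (Multiplicative.ofAdd (1 : ZMod k))
      rw [show (Monoid.Coprod.inl (Multiplicative.ofAdd (1 : ZMod k)) : CC) = GGe from rfl, hΨGG,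
        show Φ (π (Yg k n m)) = Φ0 (Yg k n m) from hΦπ _,
        show Φ0 (Yg k n m) = f 2 from hΦ0of 2, hf2]
    · apply StmtAux2.multZMod_hom_ext
      show Φ (Ψ (Monoid.Coprod.inr (Multiplicative.ofAdd (1 : ZMod j))))
        = Monoid.Coprod.inr (Multiplicative.ofAdd (1 : ZMod j))
      rw [show (Monoid.Coprod.inr (Multiplicative.ofAdd (1 : ZMod j)) : CC) = HHe from rfl, hΨHH,
        show Φ (π (cg k n m)) = Φ0 (cg k n m) from hΦπ _,
        show cg k n m = Ag k n m * Bg k n m from rfl, map_mul,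
        show Φ0 (Ag k n m) = f 0 from hΦ0of 0, show Φ0 (Bg k n m) = f 1 from hΦ0of 1, hfAB]
      rw [← zpow_natCast, ← zpow_neg, hHHz, hHHe]
      congr 1
      rw [show ((-(n : ℤ) : ℤ) : ZMod j) = ((1 : ZMod j)) from by push_cast; linear_combination -hz2']
  exact ⟨MonoidHom.toMulEquiv Φ Ψ hcomp1 hcomp2⟩

lemma zmod_ofAdd_one_ne_one {d : ℕ} (hd : 2 ≤ d) : (Multiplicative.ofAdd (1 : ZMod d)) ≠ 1 := by
  intro h
  have h1 : (1 : ZMod d) = 0 := congrArg Multiplicative.toAdd h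
  have h2 : ((1 : ℕ) : ZMod d) = 0 := by rwa [Nat.cast_one]
  have h3 := Nat.le_of_dvd one_pos ((ZMod.natCast_eq_zero_iff 1 d).mp h2)
  omega

lemma zmod_two_ne_one {d : ℕ} (hd : 3 ≤ d) :
    (Multiplicative.ofAdd (1 : ZMod d)) * (Multiplicative.ofAdd (1 : ZMod d)) ≠ 1 := by
  intro h
  have h1 : (1 : ZMod d) + 1 = 0 := congrArg Multiplicative.toAdd h
  have h2 : ((2 : ℕ) : ZMod d) = 0 := by push_cast; linear_combination h1
  have h3 := Nat.le_of_dvd (by norm_num) ((ZMod.natCast_eq_zero_iff 2 d).mp h2)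
  omega

include hm' hk1 in
lemma exists_free_subgroup (hk2 : 2 ≤ k) (hj2 : 2 ≤ j) (hkj : ¬(k = 2 ∧ j = 2))
    (hj : j = Nat.gcd (1 + m * k) (n + 1)) :
    ∃ f : FreeGroup (Fin 2) →* GP, Function.Injective f := by
  have hcase : 3 ≤ j ∨ (j = 2 ∧ 3 ≤ k) := by
    rcases Nat.lt_or_ge j 3 with h | h
    · right
      refine ⟨by omega, ?_⟩
      rcases Nat.lt_or_ge k 3 with h' | h'
      · exact absurd ⟨by omega, by omega⟩ hkj
      · exact h'
    · exact Or.inl h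
  have hTF : (true : Bool) ≠ false := fun h => Bool.noConfusion h
  have hFT : (false : Bool) ≠ true := fun h => Bool.noConfusion h
  set HC : Bool → Type := fun i => cond i (Multiplicative (ZMod k)) (Multiplicative (ZMod j))
    with hHC
  letI instG : ∀ i : Bool, Group (HC i) := fun i =>
    @Bool.rec (fun i => Group (HC i))
      (inferInstance : Group (Multiplicative (ZMod j)))
      (inferInstance : Group (Multiplicative (ZMod k))) i
  have instD : ∀ i : Bool, DecidableEq (HC i) := fun i =>
    @Bool.rec (fun i => DecidableEq (HC i))
      (inferInstance : DecidableEq (Multiplicative (ZMod j)))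
      (inferInstance : DecidableEq (Multiplicative (ZMod k))) i
  have hFex : ∃ F : FreeGroup (Fin 2) →* Monoid.CoprodI HC, Function.Injective F := by
    rcases hcase with h3 | ⟨hj2', hk3⟩
    · exact @StmtAux.exists_free_pp Bool instDecidableEqBool HC instG instD true false
        ((Multiplicative.ofAdd (1 : ZMod k)) : HC true)
        ((Multiplicative.ofAdd (1 : ZMod j)) : HC false)
        hTF (zmod_ofAdd_one_ne_one hk2) (zmod_ofAdd_one_ne_one hj2)
        (zmod_two_ne_one h3)
    · exact @StmtAux.exists_free_pp Bool instDecidableEqBool HC instG instD false true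
        ((Multiplicative.ofAdd (1 : ZMod j)) : HC false)
        ((Multiplicative.ofAdd (1 : ZMod k)) : HC true)
        hFT (zmod_ofAdd_one_ne_one hj2) (zmod_ofAdd_one_ne_one hk2)
        (zmod_two_ne_one hk3)
  obtain ⟨F, hF⟩ := hFex
  set flr : ∀ i : Bool, HC i →* (Monoid.Coprod (Multiplicative (ZMod k)) (Multiplicative (ZMod j))) :=
    fun i => by
      cases i
      · exact Monoid.Coprod.inr
      · exact Monoid.Coprod.inl
    with hflr
  set Θ : Monoid.CoprodI HC →* _ := Monoid.CoprodI.lift flr with hΘ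
  set Λ : _ →* Monoid.CoprodI HC :=
    Monoid.Coprod.lift (Monoid.CoprodI.of (i := true)) (Monoid.CoprodI.of (i := false)) with hΛ
  have hΛΘ : ∀ w, Λ (Θ w) = w := by
    have hcomp : Λ.comp Θ = MonoidHom.id _ := by
      apply Monoid.CoprodI.ext_hom
      intro i
      cases i
      · ext x
        show Λ (Θ (Monoid.CoprodI.of x)) = Monoid.CoprodI.of x
        rw [hΘ, Monoid.CoprodI.lift_of]
        show Λ (Monoid.Coprod.inr x) = _
        rw [hΛ, Monoid.Coprod.lift_apply_inr]
      · ext x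
        show Λ (Θ (Monoid.CoprodI.of x)) = Monoid.CoprodI.of x
        rw [hΘ, Monoid.CoprodI.lift_of]
        show Λ (Monoid.Coprod.inl x) = _
        rw [hΛ, Monoid.Coprod.lift_apply_inl]
    intro w
    simpa using DFunLike.congr_fun hcomp w
  have hΘinj : Function.Injective Θ := Function.LeftInverse.injective hΛΘ
  obtain ⟨e⟩ := exists_iso hm' hk1 j hj
  set τ : FreeGroup (Fin 2) →* (GP ⧸ NN) := e.symm.toMonoidHom.comp (Θ.comp F) with hτ
  have hτinj : Function.Injective τ := by
    intro u v h
    exact hF (hΘinj (e.symm.injective h))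
  have hsurj : ∀ q : GP ⧸ NN, ∃ g : GP, (QuotientGroup.mk' NN) g = q :=
    fun q => QuotientGroup.mk'_surjective _ q
  set lifts : Fin 2 → GP := fun i => (hsurj (τ (FreeGroup.of i))).choose with hlifts
  set ffin : FreeGroup (Fin 2) →* GP := FreeGroup.lift lifts with hffin
  have hcomm : ∀ u, (QuotientGroup.mk' NN) (ffin u) = τ u := by
    have hhom : (QuotientGroup.mk' NN).comp ffin = τ := by
      ext i
      show (QuotientGroup.mk' NN) (ffin (FreeGroup.of i)) = τ (FreeGroup.of i)
      rw [hffin, FreeGroup.lift_apply_of]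
      exact (hsurj (τ (FreeGroup.of i))).choose_spec
    intro u
    exact DFunLike.congr_fun hhom u
  refine ⟨ffin, fun u v h => hτinj ?_⟩
  rw [← hcomm, ← hcomm, h]

end Quot
end StmtMain


/-- In the group of the curves of family (2), `y^k` is central, the quotient by its
normal closure is `ℤ/k ∗ ℤ/j` with `j = gcd(1 + mk, n + 1)`; `G` is abelian if
`j = 1` and contains a non-abelian free subgroup if `j ≥ 2` and `(k, j) ≠ (2, 2)`. -/
theorem stmt_14 (k n m : ℕ) (hk : 2 ≤ k) (hn : 1 ≤ n) (hm : m < n)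
    (j : ℕ) (hj : j = Nat.gcd (1 + m * k) (n + 1)) :
    ((PresentedGroup.of 2 : PresentedGroup (relsFam2 k n m)) ^ k ∈
      Subgroup.center (PresentedGroup (relsFam2 k n m))) ∧
    Nonempty
      ((PresentedGroup (relsFam2 k n m) ⧸
          Subgroup.normalClosure
            ({(PresentedGroup.of 2 : PresentedGroup (relsFam2 k n m)) ^ k} :
              Set (PresentedGroup (relsFam2 k n m)))) ≃*
        Monoid.Coprod (Multiplicative (ZMod k)) (Multiplicative (ZMod j))) ∧
    (j = 1 → ∀ x y : PresentedGroup (relsFam2 k n m), x * y = y * x) ∧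
    (2 ≤ j → ¬(k = 2 ∧ j = 2) →
      ∃ f : FreeGroup (Fin 2) →* PresentedGroup (relsFam2 k n m),
        Function.Injective f) := by
  have hm' : m ≤ n := hm.le
  have hk1 : 1 ≤ k := by omega
  refine ⟨StmtMain.hcent k n m, ?_, ?_, ?_⟩
  · exact StmtMain.exists_iso hm' hk1 j hj
  · intro h1 x y
    apply StmtMain.abelian_of_gcd_one hm' hk1
    · rw [← hj]; exact h1
  · intro hj2 hkj
    exact StmtMain.exists_free_subgroup hm' hk1 j hk hj2 hkj hj
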